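/- On the set A = {a, b, c} of three alternatives, define d(X,Y) = 0 if X = Y, d(X,Y) = 1 if X ∩ Y = ∅ and X ∪ Y = A, and d(X,Y) = 2 otherwise. Then d is a metric on subsets of A that is majority-concentric but not natural. -/
import Mathlib


/-- The distance on subsets of a three-element set: `0` if equal, `1` if the two sets are
disjoint and cover everything, `2` otherwise. -/
def dEx (X Y : Finset (Fin 3)) : ℝ :=
  if X = Y then 0 else if X ∩ Y = ∅ ∧ X ∪ Y = Finset.univ then 1 else 2

/-- `d` is a distance metric on subsets. -/
def IsMetric {α : Type*} (d : Finset α → Finset α → ℝ) : Prop :=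
  (∀ X Y, 0 ≤ d X Y) ∧ (∀ X Y, d X Y = 0 ↔ X = Y) ∧
  (∀ X Y, d X Y = d Y X) ∧ (∀ X Y Z, d X Z ≤ d X Y + d Y Z)

/-- `d` is natural. -/
def IsNatural {α : Type*} [DecidableEq α] (d : Finset α → Finset α → ℝ) : Prop :=
  ∀ U V S : Finset α, U.card = V.card → (V ∩ S).card < (U ∩ S).card → d U S ≤ d V S

/-- `d` is majority-concentric. -/
def IsMajorityConcentric {α : Type*} [Fintype α] [DecidableEq α]
    (d : Finset α → Finset α → ℝ) : Prop :=
  ∀ (U : Finset α) (a b : α), a ∈ U → b ∉ U → ∀ t : ℝ, 0 ≤ t →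
    {S : Finset α | b ∈ S ∧ a ∉ S ∧ d U S ≤ t}.ncard ≤
      {S : Finset α | a ∈ S ∧ b ∉ S ∧ d U S ≤ t}.ncard

lemma dEx_nonneg (X Y : Finset (Fin 3)) : 0 ≤ dEx X Y := by
  unfold dEx; split_ifs <;> norm_num

lemma dEx_le_two (X Y : Finset (Fin 3)) : dEx X Y ≤ 2 := by
  unfold dEx; split_ifs <;> norm_num

lemma dEx_ge_one {X Y : Finset (Fin 3)} (h : X ≠ Y) : 1 ≤ dEx X Y := by
  unfold dEx; split_ifs with h1 h2
  · exact absurd h1 h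
  · norm_num
  · norm_num

lemma dEx_self (X : Finset (Fin 3)) : dEx X X = 0 := by simp [dEx]

lemma ncard_setOf (p : Finset (Fin 3) → Prop) [DecidablePred p] :
    {S | p S}.ncard = (Finset.univ.filter p).card := by
  rw [Set.ncard_eq_toFinset_card']
  simp [Set.toFinset_setOf]

lemma swap_count : ∀ a b : Fin 3,
    (Finset.univ.filter (fun S : Finset (Fin 3) => b ∈ S ∧ a ∉ S)).card =
    (Finset.univ.filter (fun S : Finset (Fin 3) => a ∈ S ∧ b ∉ S)).card := by decide

theorem stmt7 : IsMetric dEx ∧ IsMajorityConcentric dEx ∧ ¬ IsNatural dEx := by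
  refine ⟨⟨dEx_nonneg, ?_, ?_, ?_⟩, ?_, ?_⟩
  · -- identity of indiscernibles
    intro X Y
    constructor
    · intro h
      by_contra hne
      have := dEx_ge_one hne
      linarith
    · rintro rfl; exact dEx_self X
  · -- symmetry
    intro X Y
    unfold dEx
    by_cases h : X = Y
    · simp [h]
    · rw [if_neg h, if_neg (Ne.symm h), Finset.inter_comm, Finset.union_comm]
  · -- triangle inequality
    intro X Y Z
    by_cases h1 : X = Y
    · subst h1; rw [dEx_self]; linarith
    by_cases h2 : Y = Z
    · subst h2; rw [dEx_self]; linarith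
    by_cases h3 : (X ∩ Y = ∅ ∧ X ∪ Y = Finset.univ) ∧ (Y ∩ Z = ∅ ∧ Y ∪ Z = Finset.univ)
    · have hXZ : X = Z := by
        obtain ⟨⟨ha1, ha2⟩, ⟨hb1, hb2⟩⟩ := h3
        ext x
        have e1 : ¬(x ∈ X ∧ x ∈ Y) := by
          intro hx; have : x ∈ X ∩ Y := Finset.mem_inter.mpr hx; simp [ha1] at this
        have e2 : x ∈ X ∨ x ∈ Y := Finset.mem_union.mp (by rw [ha2]; exact Finset.mem_univ x)
        have e3 : ¬(x ∈ Y ∧ x ∈ Z) := by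
          intro hx; have : x ∈ Y ∩ Z := Finset.mem_inter.mpr hx; simp [hb1] at this
        have e4 : x ∈ Y ∨ x ∈ Z := Finset.mem_union.mp (by rw [hb2]; exact Finset.mem_univ x)
        tauto
      rw [hXZ, dEx_self]
      linarith [dEx_nonneg Z Y, dEx_nonneg Y Z]
    · by_cases hA : X ∩ Y = ∅ ∧ X ∪ Y = Finset.univ
      · have hB : ¬(Y ∩ Z = ∅ ∧ Y ∪ Z = Finset.univ) := fun hb => h3 ⟨hA, hb⟩
        have : dEx Y Z = 2 := by unfold dEx; rw [if_neg h2, if_neg hB]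
        linarith [dEx_le_two X Z, dEx_ge_one h1]
      · have : dEx X Y = 2 := by unfold dEx; rw [if_neg h1, if_neg hA]
        linarith [dEx_le_two X Z, dEx_ge_one h2]
  · -- majority-concentric
    intro U a b ha hb t ht
    rcases lt_or_ge t 1 with h1 | h1
    · have hempty : {S : Finset (Fin 3) | b ∈ S ∧ a ∉ S ∧ dEx U S ≤ t} = ∅ := by
        ext S
        simp only [Set.mem_setOf_eq, Set.mem_empty_iff_false, iff_false, not_and]
        intro hbS haS hd
        have hne : U ≠ S := fun h => haS (h ▸ ha)
        have := dEx_ge_one hne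
        linarith
      rw [hempty]
      simp
    rcases lt_or_ge t 2 with h2 | h2
    · have hL : {S : Finset (Fin 3) | b ∈ S ∧ a ∉ S ∧ dEx U S ≤ t} ⊆ {Uᶜ} := by
        rintro S ⟨hbS, haS, hd⟩
        have hne : U ≠ S := fun h => haS (h ▸ ha)
        have hcond : U ∩ S = ∅ ∧ U ∪ S = Finset.univ := by
          by_contra hc
          have : dEx U S = 2 := by unfold dEx; rw [if_neg hne, if_neg hc]
          linarith
        have : S = Uᶜ := by
          ext x
          have e1 : ¬(x ∈ U ∧ x ∈ S) := by
            intro hx; have : x ∈ U ∩ S := Finset.mem_inter.mpr hx; simp [hcond.1] at this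
          have e2 : x ∈ U ∨ x ∈ S := Finset.mem_union.mp (by rw [hcond.2]; exact Finset.mem_univ x)
          simp only [Finset.mem_compl]
          tauto
        simp [this]
      have hle : {S : Finset (Fin 3) | b ∈ S ∧ a ∉ S ∧ dEx U S ≤ t}.ncard ≤ 1 := by
        have := Set.ncard_le_ncard hL (Set.finite_singleton _)
        simpa using this
      have hU : U ∈ {S : Finset (Fin 3) | a ∈ S ∧ b ∉ S ∧ dEx U S ≤ t} := by
        refine ⟨ha, hb, ?_⟩
        rw [dEx_self]; linarith
      have hpos : 1 ≤ {S : Finset (Fin 3) | a ∈ S ∧ b ∉ S ∧ dEx U S ≤ t}.ncard := by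
        have := (Set.ncard_pos (Set.toFinite _)).mpr ⟨U, hU⟩
        omega
      omega
    · have hall : ∀ S, dEx U S ≤ t := fun S => le_trans (dEx_le_two U S) h2
      have e1 : {S : Finset (Fin 3) | b ∈ S ∧ a ∉ S ∧ dEx U S ≤ t}
          = {S : Finset (Fin 3) | b ∈ S ∧ a ∉ S} := by
        ext S; simp [hall S]
      have e2 : {S : Finset (Fin 3) | a ∈ S ∧ b ∉ S ∧ dEx U S ≤ t}
          = {S : Finset (Fin 3) | a ∈ S ∧ b ∉ S} := by
        ext S; simp [hall S]
      rw [e1, e2, ncard_setOf, ncard_setOf, swap_count]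
  · -- not natural
    intro h
    have := h {0} {2} {0, 1} (by decide) (by decide)
    have h1 : dEx ({0} : Finset (Fin 3)) {0, 1} = 2 := by
      unfold dEx
      rw [if_neg (by decide), if_neg (by decide)]
    have h2 : dEx ({2} : Finset (Fin 3)) {0, 1} = 1 := by
      unfold dEx
      rw [if_neg (by decide), if_pos (by decide)]
    rw [h1, h2] at this
    linarith
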